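/- arXiv:2008.12074 — 2 statements merged into one kernel-verified Lean document; each statement's English description precedes it below -/
import Mathlib

section
/- Let F(x,y) = (1/3)x³ + (1/2)x² + (x+y)²y² + (1/4)y⁴ and let γ = (γ₁, γ₂) : I → ℝ² be a differentiable curve on an open interval I solving the gradient system γ'(t) = grad F(γ(t)) for all t ∈ I. If γ₂(t₀) = 0 for some t₀ ∈ I, then γ₂(t) = 0 for all t ∈ I, and γ₁ satisfies γ₁'(t) = γ₁(t)² + γ₁(t) on I. -/
open Set Real

/-- The polynomial `F(x,y) = (1/3)x³ + (1/2)x² + (x+y)²y² + (1/4)y⁴`. -/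
noncomputable def F (x y : ℝ) : ℝ :=
  (1/3) * x^3 + (1/2) * x^2 + (x + y)^2 * y^2 + (1/4) * y^4

/-- `∂F/∂x`, the first component of `grad F`. -/
noncomputable def Fx (x y : ℝ) : ℝ := deriv (fun s : ℝ => F s y) x

/-- `∂F/∂y`, the second component of `grad F`. -/
noncomputable def Fy (x y : ℝ) : ℝ := deriv (fun s : ℝ => F x s) y

lemma Fx_eq (x y : ℝ) : Fx x y = x^2 + x + 2*(x+y)*y^2 := by
  have h : HasDerivAt (fun s : ℝ => F s y) (x^2 + x + 2*(x+y)*y^2) x := by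
    have h1 : HasDerivAt (fun s : ℝ => (1/3)*s^3) ((1/3)*(3*x^2)) x :=
      (hasDerivAt_pow 3 x).const_mul _
    have h2 : HasDerivAt (fun s : ℝ => (1/2)*s^2) ((1/2)*(2*x)) x := by
      simpa using (hasDerivAt_pow 2 x).const_mul (1/2 : ℝ)
    have h3 : HasDerivAt (fun s : ℝ => (s+y)^2*y^2)
        ((2*(x+y)^1*1)*y^2) x :=
      (((hasDerivAt_id x).add_const y).pow 2).mul_const _
    have h4 : HasDerivAt (fun _ : ℝ => (1/4)*y^4) 0 x := hasDerivAt_const _ _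
    have := ((h1.add h2).add h3).add h4
    simp only [F]
    refine (this.congr_deriv (by ring)).congr_of_eventuallyEq (Filter.Eventually.of_forall fun s => ?_)
    simp only [Pi.add_apply]
  simp [Fx, h.deriv]

lemma Fy_eq (x y : ℝ) : Fy x y = (2*(x+y)*y + 2*(x+y)^2 + y^2) * y := by
  have h : HasDerivAt (fun s : ℝ => F x s)
      ((2*(x+y)*y + 2*(x+y)^2 + y^2) * y) y := by
    have h1 : HasDerivAt (fun _ : ℝ => (1/3)*x^3 + (1/2)*x^2) 0 y := hasDerivAt_const _ _
    have h3 : HasDerivAt (fun s : ℝ => (x+s)^2*s^2)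
        ((2*(x+y)^1*1)*y^2 + (x+y)^2*(2*y)) y := by
      have ha : HasDerivAt (fun s : ℝ => (x+s)^2) (2*(x+y)^1*1) y :=
        ((hasDerivAt_id y).const_add x).pow 2
      have hb : HasDerivAt (fun s : ℝ => s^2) (2*y) y := by simpa using hasDerivAt_pow 2 y
      exact ha.mul hb
    have h4 : HasDerivAt (fun s : ℝ => (1/4)*s^4) ((1/4)*(4*y^3)) y :=
      (hasDerivAt_pow 4 y).const_mul _
    have := (h1.add h3).add h4
    simp only [F]
    refine (this.congr_deriv (by ring)).congr_of_eventuallyEq (Filter.Eventually.of_forall fun s => ?_)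
    simp only [Pi.add_apply]
  simp [Fy, h.deriv]

lemma zero_on_Icc_fwd {f g : ℝ → ℝ} {K a b : ℝ}
    (hd : ∀ t ∈ Icc a b, HasDerivAt f (g t * f t) t)
    (hK : ∀ t ∈ Icc a b, |g t| ≤ K) (ha : f a = 0) :
    ∀ t ∈ Icc a b, f t = 0 := by
  have hcont : ContinuousOn f (Icc a b) := fun t ht => (hd t ht).continuousAt.continuousWithinAt
  have hd' : ∀ t ∈ Ico a b, HasDerivWithinAt f (g t * f t) (Ici t) t :=
    fun t ht => (hd t (Ico_subset_Icc_self ht)).hasDerivWithinAt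
  have hB : ∀ t ∈ Ico a b, ‖g t * f t‖ ≤ K * ‖f t‖ + 0 := by
    intro t ht
    rw [add_zero, Real.norm_eq_abs, Real.norm_eq_abs, abs_mul]
    exact mul_le_mul_of_nonneg_right (hK t (Ico_subset_Icc_self ht)) (abs_nonneg _)
  have h0 : ‖f a‖ ≤ 0 := by simp [ha]
  intro t ht
  have := norm_le_gronwallBound_of_norm_deriv_right_le hcont hd' h0 hB t ht
  rw [gronwallBound_ε0_δ0] at this
  simpa using le_antisymm this (norm_nonneg _)

lemma zero_on_Icc_bwd {f g : ℝ → ℝ} {K a b : ℝ}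
    (hd : ∀ t ∈ Icc a b, HasDerivAt f (g t * f t) t)
    (hK : ∀ t ∈ Icc a b, |g t| ≤ K) (hb : f b = 0) :
    ∀ t ∈ Icc a b, f t = 0 := by
  have key : ∀ t ∈ Icc a b, f (a + b - t) = 0 := by
    apply zero_on_Icc_fwd (g := fun t => -(g (a + b - t))) (K := K)
    · intro t ht
      have hmem : a + b - t ∈ Icc a b := by constructor <;> [linarith [ht.2]; linarith [ht.1]]
      have hc : HasDerivAt (fun s : ℝ => a + b - s) (-1 : ℝ) t := by
        simpa using ((hasDerivAt_id t).const_sub (a + b))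
      have := (hd _ hmem).comp t hc
      exact this.congr_deriv (by ring)
    · intro t ht
      have hmem : a + b - t ∈ Icc a b := by constructor <;> [linarith [ht.2]; linarith [ht.1]]
      simpa using hK _ hmem
    · simpa using hb
  intro t ht
  have hmem : a + b - t ∈ Icc a b := by constructor <;> [linarith [ht.2]; linarith [ht.1]]
  have := key _ hmem
  simpa using this

/-- If `γ = (γ₁, γ₂)` is a differentiable curve on an open interval `I` solving the
gradient system `γ' = grad F ∘ γ`, and `γ₂(t₀) = 0` for some `t₀ ∈ I`, then `γ₂ ≡ 0`
on `I` and `γ₁` satisfies `γ₁' = γ₁² + γ₁` on `I`. -/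
theorem solution_on_invariant_line
    (I : Set ℝ) (hIopen : IsOpen I) (hIconn : IsPreconnected I)
    (γ₁ γ₂ : ℝ → ℝ)
    (h₁ : ∀ t ∈ I, HasDerivAt γ₁ (Fx (γ₁ t) (γ₂ t)) t)
    (h₂ : ∀ t ∈ I, HasDerivAt γ₂ (Fy (γ₁ t) (γ₂ t)) t)
    (t₀ : ℝ) (ht₀ : t₀ ∈ I) (hzero : γ₂ t₀ = 0) :
    (∀ t ∈ I, γ₂ t = 0) ∧
    (∀ t ∈ I, HasDerivAt γ₁ ((γ₁ t)^2 + γ₁ t) t) := by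
  set g : ℝ → ℝ := fun t => 2*(γ₁ t + γ₂ t)*(γ₂ t) + 2*(γ₁ t + γ₂ t)^2 + (γ₂ t)^2 with hg
  have h₂' : ∀ t ∈ I, HasDerivAt γ₂ (g t * γ₂ t) t := by
    intro t ht
    have := h₂ t ht
    rwa [Fy_eq] at this
  have hgc : ContinuousOn g I := by
    have c1 : ContinuousOn γ₁ I := fun t ht => (h₁ t ht).continuousAt.continuousWithinAt
    have c2 : ContinuousOn γ₂ I := fun t ht => (h₂ t ht).continuousAt.continuousWithinAt
    fun_prop
  -- the zero set is open
  set S : Set ℝ := {t | t ∈ I ∧ γ₂ t = 0} with hS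
  have hSopen : IsOpen S := by
    rw [isOpen_iff_forall_mem_open]
    rintro s ⟨hsI, hs0⟩
    obtain ⟨ε, hε, hball⟩ := Metric.isOpen_iff.mp hIopen s hsI
    have hIcc : Icc (s - ε/2) (s + ε/2) ⊆ I := by
      intro x hx
      apply hball
      rw [Real.ball_eq_Ioo]
      constructor <;> [nlinarith [hx.1]; nlinarith [hx.2]]
    obtain ⟨K, hK⟩ := (isCompact_Icc (a := s - ε/2) (b := s + ε/2)).exists_bound_of_continuousOn
      (hgc.mono hIcc)
    have hfwd : ∀ t ∈ Icc s (s + ε/2), γ₂ t = 0 := by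
      apply zero_on_Icc_fwd (g := g) (K := K) _ _ hs0
      · intro t ht
        exact h₂' t (hIcc ⟨by linarith [ht.1, hε], ht.2⟩)
      · intro t ht
        simpa using hK t ⟨by linarith [ht.1, hε], ht.2⟩
    have hbwd : ∀ t ∈ Icc (s - ε/2) s, γ₂ t = 0 := by
      apply zero_on_Icc_bwd (g := g) (K := K) _ _ hs0
      · intro t ht
        exact h₂' t (hIcc ⟨ht.1, by linarith [ht.2, hε]⟩)
      · intro t ht
        simpa using hK t ⟨ht.1, by linarith [ht.2, hε]⟩
    refine ⟨Ioo (s - ε/2) (s + ε/2), ?_, isOpen_Ioo, ⟨by linarith, by linarith⟩⟩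
    intro x hx
    refine ⟨hIcc ⟨hx.1.le, hx.2.le⟩, ?_⟩
    rcases le_total x s with h | h
    · exact hbwd x ⟨hx.1.le, h⟩
    · exact hfwd x ⟨h, hx.2.le⟩
  -- the complement within I is open
  have hVopen : IsOpen {t | t ∈ I ∧ γ₂ t ≠ 0} := by
    have c2 : ContinuousOn γ₂ I := fun t ht => (h₂ t ht).continuousAt.continuousWithinAt
    have heq : {t | t ∈ I ∧ γ₂ t ≠ 0} = I ∩ γ₂ ⁻¹' {(0:ℝ)}ᶜ := by
      ext t; simp [Set.mem_inter_iff]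
    rw [heq]
    exact c2.isOpen_inter_preimage hIopen isOpen_compl_singleton
  have hall : ∀ t ∈ I, γ₂ t = 0 := by
    by_contra hcon
    push_neg at hcon
    obtain ⟨s, hsI, hs⟩ := hcon
    obtain ⟨x, hx⟩ := hIconn S {t | t ∈ I ∧ γ₂ t ≠ 0} hSopen hVopen
      (fun t ht => by by_cases h : γ₂ t = 0 <;> [exact Or.inl ⟨ht, h⟩; exact Or.inr ⟨ht, h⟩])
      ⟨t₀, ht₀, ht₀, hzero⟩ ⟨s, hsI, hsI, hs⟩
    exact hx.2.2.2 hx.2.1.2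
  refine ⟨hall, fun t ht => ?_⟩
  have := h₁ t ht
  rw [Fx_eq, hall t ht] at this
  simpa using this
end

section
/- The function E : (−1, ∞) → ℝ defined by E(x) = ∫₀ˣ e^{2t}/(t+1) dt is not a rational function of x and e^{2x}: there do not exist real polynomials P, Q in two variables such that Q(x, e^{2x}) ≠ 0 for all x ∈ (−1, ∞) and E(x) = P(x, e^{2x})/Q(x, e^{2x}) for all x ∈ (−1, ∞). -/
open Polynomial Filter Real
open scoped Polynomial.Bivariate

noncomputable section ExponentialIntegralAux

/-- The differential operator on `ℝ[x][u]` corresponding to `d/dx` under `u = e^{2x}`: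
coefficientwise `bᵢ ↦ bᵢ' + 2 i bᵢ`. -/
def Dop (B : ℝ[X][Y]) : ℝ[X][Y] :=
  B.sum fun i a => Polynomial.monomial i
    (Polynomial.derivative a + Polynomial.C (2 * (i : ℝ)) * a)

lemma Dop_monomial (n : ℕ) (a : ℝ[X]) :
    Dop (Polynomial.monomial n a) =
      Polynomial.monomial n (Polynomial.derivative a + Polynomial.C (2 * (n : ℝ)) * a) := by
  unfold Dop
  rw [Polynomial.sum_monomial_index]
  simp

lemma Dop_add (p q : ℝ[X][Y]) : Dop (p + q) = Dop p + Dop q := by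
  unfold Dop
  rw [Polynomial.sum_add_index]
  · intro i; simp
  · intro i a b
    rw [← map_add (Polynomial.monomial i), Polynomial.derivative_add]
    congr 1
    ring

lemma Dop_coeff (B : ℝ[X][Y]) (k : ℕ) :
    (Dop B).coeff k =
      Polynomial.derivative (B.coeff k) + Polynomial.C (2 * (k : ℝ)) * B.coeff k := by
  unfold Dop
  rw [Polynomial.coeff_sum]
  unfold Polynomial.sum
  simp only [Polynomial.coeff_monomial]
  rw [Finset.sum_ite_eq' B.support k
    (fun i => Polynomial.derivative (B.coeff i) + Polynomial.C (2 * (i : ℝ)) * B.coeff i)]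
  by_cases h : k ∈ B.support
  · rw [if_pos h]
  · rw [if_neg h]
    rw [Polynomial.notMem_support_iff.mp h]
    simp

lemma Dop_natDegree_le (B : ℝ[X][Y]) : (Dop B).natDegree ≤ B.natDegree := by
  rw [Polynomial.natDegree_le_iff_coeff_eq_zero]
  intro m hm
  rw [Dop_coeff, Polynomial.coeff_eq_zero_of_natDegree_lt hm]
  simp


lemma coeff_derivative_mul_top (p q : ℝ[X]) :
    (Polynomial.derivative p * q).coeff (p.natDegree + q.natDegree) = 0 := by
  by_cases hp : p.natDegree = 0
  · rw [Polynomial.derivative_of_natDegree_zero hp]; simp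
  · apply Polynomial.coeff_eq_zero_of_natDegree_lt
    calc (Polynomial.derivative p * q).natDegree
        ≤ (Polynomial.derivative p).natDegree + q.natDegree := Polynomial.natDegree_mul_le
      _ ≤ (p.natDegree - 1) + q.natDegree := by
          gcongr; exact Polynomial.natDegree_derivative_le p
      _ < p.natDegree + q.natDegree := by omega

/-- No nonzero rational function has logarithmic derivative a nonzero constant. -/
lemma no_logderiv (p q : ℝ[X]) (hp : p ≠ 0) (hq : q ≠ 0) (k : ℝ) (hk : k ≠ 0)
    (h : Polynomial.derivative p * q - p * Polynomial.derivative q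
        = Polynomial.C k * (p * q)) : False := by
  have h2 := congrArg (fun r => Polynomial.coeff r (p.natDegree + q.natDegree)) h
  simp only [Polynomial.coeff_sub, Polynomial.coeff_C_mul] at h2
  rw [coeff_derivative_mul_top, Polynomial.coeff_mul_degree_add_degree] at h2
  have h3 : (p * Polynomial.derivative q).coeff (p.natDegree + q.natDegree) = 0 := by
    rw [mul_comm, add_comm]; exact coeff_derivative_mul_top q p
  rw [h3] at h2
  rw [sub_zero] at h2
  have := mul_ne_zero (Polynomial.leadingCoeff_ne_zero.mpr hp)
    (Polynomial.leadingCoeff_ne_zero.mpr hq)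
  exact (mul_ne_zero hk this) h2.symm

lemma X_add_one_ne_zero : (Polynomial.X + 1 : ℝ[X]) ≠ 0 := fun h => by
  simpa using congrArg (Polynomial.eval 0) h

lemma no_liouville_coprime (p q : ℝ[X]) (hq : q ≠ 0) (hco : IsCoprime p q)
    (h : (Polynomial.X + 1) * (Polynomial.derivative p * q - p * Polynomial.derivative q)
        + 2 * ((Polynomial.X + 1) * (p * q)) = q ^ 2) : False := by
  obtain ⟨w, hw, hndvd⟩ := q.exists_eq_pow_rootMultiplicity_mul_and_not_dvd hq (-1)
  have hw1 : w.eval (-1) ≠ 0 := fun h0 => hndvd (Polynomial.dvd_iff_isRoot.mpr h0)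
  rw [show (Polynomial.X - Polynomial.C (-1 : ℝ)) = Polynomial.X + 1 by
    rw [map_neg, sub_neg_eq_add, Polynomial.C_1]] at hw
  obtain ⟨k, hk⟩ : ∃ k, q.rootMultiplicity (-1) = k := ⟨_, rfl⟩
  rw [hk] at hw
  clear hk
  cases k with
  | zero =>
      rw [pow_zero, one_mul] at hw
      have h1 := congrArg (Polynomial.eval (-1)) h
      rw [hw] at h1
      simp only [Polynomial.eval_add, Polynomial.eval_mul, Polynomial.eval_sub,
        Polynomial.eval_pow, Polynomial.eval_X, Polynomial.eval_one,
        Polynomial.eval_ofNat] at h1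
      rw [show (-1 : ℝ) + 1 = 0 by norm_num] at h1
      simp at h1
      exact pow_ne_zero 2 hw1 h1.symm
  | succ k' =>
      have hq1 : q.eval (-1) = 0 := by
        rw [hw]
        simp [show (-1 : ℝ) + 1 = 0 by norm_num]
      have hp1 : p.eval (-1) ≠ 0 := by
        obtain ⟨a, b, hab⟩ := hco
        have := congrArg (Polynomial.eval (-1)) hab
        simp only [Polynomial.eval_add, Polynomial.eval_mul, Polynomial.eval_one, hq1,
          mul_zero, add_zero] at this
        intro h0
        rw [h0, mul_zero] at this
        exact zero_ne_one this
      have hq' : Polynomial.derivative q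
          = Polynomial.C ((k' : ℝ) + 1) * (Polynomial.X + 1) ^ k' * w
            + (Polynomial.X + 1) ^ (k' + 1) * Polynomial.derivative w := by
        rw [hw]
        rw [Polynomial.derivative_mul, Polynomial.derivative_pow]
        simp only [Polynomial.derivative_add, Polynomial.derivative_X,
          Polynomial.derivative_one, add_zero, mul_one, Nat.add_sub_cancel,
          Nat.cast_add, Nat.cast_one, map_add, Polynomial.C_1, Polynomial.C_eq_natCast]
        try ring
      rw [hq', hw] at h
      have key : (Polynomial.X + 1) ^ (k' + 1) *
          ((Polynomial.X + 1) * (Polynomial.derivative p * w - p * Polynomial.derivative w)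
            - Polynomial.C ((k' : ℝ) + 1) * (p * w)
            + 2 * ((Polynomial.X + 1) * (p * w))
            - (Polynomial.X + 1) ^ (k' + 1) * w ^ 2) = 0 := by
        linear_combination h
      have hXk : ((Polynomial.X + 1 : ℝ[X])) ^ (k' + 1) ≠ 0 :=
        pow_ne_zero _ X_add_one_ne_zero
      have key2 := (mul_eq_zero.mp key).resolve_left hXk
      have h1 := congrArg (Polynomial.eval (-1)) key2
      simp only [Polynomial.eval_sub, Polynomial.eval_add, Polynomial.eval_mul,
        Polynomial.eval_pow, Polynomial.eval_X, Polynomial.eval_one, Polynomial.eval_C,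
        Polynomial.eval_ofNat, Polynomial.eval_zero] at h1
      rw [show (-1 : ℝ) + 1 = 0 by norm_num] at h1
      simp only [zero_mul, mul_zero, zero_sub, zero_add, sub_zero, zero_pow,
        Nat.succ_ne_zero, ne_eq, not_false_iff] at h1
      have : ((k' : ℝ) + 1) * (p.eval (-1) * w.eval (-1)) = 0 := by linarith
      rcases mul_eq_zero.mp this with h2 | h2
      · exact (Nat.cast_add_one_ne_zero k') h2
      · rcases mul_eq_zero.mp h2 with h3 | h3
        · exact hp1 h3
        · exact hw1 h3

lemma no_liouville (p q : ℝ[X]) (hq : q ≠ 0)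
    (h : (Polynomial.X + 1) * (Polynomial.derivative p * q - p * Polynomial.derivative q)
        + 2 * ((Polynomial.X + 1) * (p * q)) = q ^ 2) : False := by
  set d := GCDMonoid.gcd p q with hd
  have hd0 : d ≠ 0 := fun h0 => hq ((gcd_eq_zero_iff p q).mp h0).2
  set p1 := p / d with hp1
  set q1 := q / d with hq1
  have hpd : p = d * p1 := (EuclideanDomain.mul_div_cancel' hd0 (GCDMonoid.gcd_dvd_left p q)).symm
  have hqd : q = d * q1 := (EuclideanDomain.mul_div_cancel' hd0 (GCDMonoid.gcd_dvd_right p q)).symm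
  have hq10 : q1 ≠ 0 := fun h0 => hq (by rw [hqd, h0, mul_zero])
  have hco : IsCoprime p1 q1 := isCoprime_div_gcd_div_gcd hq
  apply no_liouville_coprime p1 q1 hq10 hco
  have hexp : (Polynomial.X + 1) * (Polynomial.derivative p1 * q1 - p1 * Polynomial.derivative q1)
        + 2 * ((Polynomial.X + 1) * (p1 * q1)) = q1 ^ 2 ∨ d ^ 2 = 0 := by
    rw [hpd, hqd, Polynomial.derivative_mul, Polynomial.derivative_mul] at h
    have : d ^ 2 * ((Polynomial.X + 1) *
        (Polynomial.derivative p1 * q1 - p1 * Polynomial.derivative q1)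
          + 2 * ((Polynomial.X + 1) * (p1 * q1)) - q1 ^ 2) = 0 := by linear_combination h
    rcases mul_eq_zero.mp this with h1 | h1
    · right; exact h1
    · left; exact sub_eq_zero.mp h1
  rcases hexp with h1 | h1
  · exact h1
  · exact absurd h1 (pow_ne_zero 2 hd0)


lemma poly_mul_exp_neg_tendsto (p : ℝ[X]) (c : ℝ) (hc : 0 < c) :
    Tendsto (fun x => p.eval x * Real.exp (-(c * x))) atTop (nhds 0) := by
  induction p using Polynomial.induction_on' with
  | add f g hf hg =>
      have := hf.add hg
      simp only [Polynomial.eval_add, add_mul, add_zero] at this ⊢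
      exact this
  | monomial n a =>
      have h1 : Tendsto (fun x => c * x) atTop atTop :=
        Tendsto.const_mul_atTop hc tendsto_id
      have h2 : Tendsto (fun x => (c * x) ^ n * Real.exp (-(c * x))) atTop (nhds 0) :=
        (Real.tendsto_pow_mul_exp_neg_atTop_nhds_zero n).comp h1
      have h3 := h2.const_mul (a / c ^ n)
      rw [mul_zero] at h3
      apply h3.congr
      intro x
      rw [Polynomial.eval_monomial]
      field_simp [mul_pow]
      ring

lemma evalEval_exp_zero (S : ℝ[X][Y])
    (h : ∀ x ∈ Set.Ioi (-1 : ℝ), S.evalEval x (Real.exp (2 * x)) = 0) : S = 0 := by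
  by_contra hS
  set n := S.natDegree with hn
  have hlead : S.coeff n ≠ 0 := Polynomial.leadingCoeff_ne_zero.mpr hS
  have hexpand : ∀ x : ℝ, ∀ u : ℝ,
      S.evalEval x u = ∑ i ∈ Finset.range (n + 1), (S.coeff i).eval x * u ^ i := by
    intro x u
    have h1 : Polynomial.eval (Polynomial.C u) S
        = ∑ i ∈ Finset.range (n + 1), S.coeff i * Polynomial.C u ^ i :=
      Polynomial.eval_eq_sum_range _
    rw [Polynomial.evalEval, h1, Polynomial.eval_finset_sum]
    exact Finset.sum_congr rfl fun i _ => by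
      rw [Polynomial.eval_mul, Polynomial.eval_pow, Polynomial.eval_C]
  have hmain : Tendsto (fun x => (S.coeff n).eval x) atTop (nhds 0) := by
    have hterm : ∀ i ∈ Finset.range n,
        Tendsto (fun x => -((S.coeff i).eval x
          * Real.exp (2 * x) ^ i / Real.exp (2 * x) ^ n)) atTop (nhds 0) := by
      intro i hi
      have hin : i < n := Finset.mem_range.mp hi
      have hc : (0 : ℝ) < 2 * ((n : ℝ) - i) := by
        have : (i : ℝ) < n := by exact_mod_cast hin
        linarith
      have hne := (poly_mul_exp_neg_tendsto (S.coeff i) (2 * ((n : ℝ) - i)) hc).neg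
      rw [neg_zero] at hne
      apply hne.congr
      intro x
      have harg : (i : ℝ) * (2 * x) - (n : ℝ) * (2 * x) = -(2 * ((n : ℝ) - i) * x) := by ring
      rw [← Real.exp_nat_mul, ← Real.exp_nat_mul, mul_div_assoc, ← Real.exp_sub, harg]
    have hsum := tendsto_finset_sum (Finset.range n) hterm
    rw [Finset.sum_const_zero] at hsum
    apply hsum.congr'
    filter_upwards [eventually_gt_atTop (-1 : ℝ)] with x hx
    have h0 := h x hx
    rw [hexpand x (Real.exp (2 * x)), Finset.sum_range_succ] at h0
    have hEn : Real.exp (2 * x) ^ n ≠ 0 := pow_ne_zero _ (Real.exp_ne_zero _)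
    have hsum' : ∑ i ∈ Finset.range n, (S.coeff i).eval x * Real.exp (2 * x) ^ i
        = -((S.coeff n).eval x * Real.exp (2 * x) ^ n) := by linarith
    calc ∑ i ∈ Finset.range n,
          -((S.coeff i).eval x * Real.exp (2 * x) ^ i / Real.exp (2 * x) ^ n)
        = -((∑ i ∈ Finset.range n, (S.coeff i).eval x * Real.exp (2 * x) ^ i)
            / Real.exp (2 * x) ^ n) := by
          rw [Finset.sum_div]
          simp [neg_div]
      _ = (S.coeff n).eval x := by
          rw [hsum']
          field_simp
  by_cases hdeg : (S.coeff n).natDegree = 0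
  · have hc := Polynomial.eq_C_of_natDegree_eq_zero hdeg
    rw [hc] at hmain hlead
    simp only [Polynomial.eval_C] at hmain
    have h0 : (S.coeff n).coeff 0 = 0 := tendsto_nhds_unique tendsto_const_nhds hmain
    rw [h0, Polynomial.C_0] at hlead
    exact hlead rfl
  · have hdpos : 0 < (S.coeff n).degree :=
      Polynomial.natDegree_pos_iff_degree_pos.mp (Nat.pos_of_ne_zero hdeg)
    have habs := Polynomial.abs_tendsto_atTop _ hdpos
    exact not_tendsto_atTop_of_tendsto_nhds hmain.abs (by simpa using habs)


lemma hasDerivAt_evalEval (B : ℝ[X][Y]) (x : ℝ) :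
    HasDerivAt (fun y => B.evalEval y (Real.exp (2 * y)))
      ((Dop B).evalEval x (Real.exp (2 * x))) x := by
  induction B using Polynomial.induction_on' with
  | add f g hf hg =>
      have := hf.add hg
      rw [Dop_add] at *
      simp only [Polynomial.evalEval_add] at *
      exact this
  | monomial m a =>
      rw [Dop_monomial]
      have heE : ∀ y : ℝ, (Polynomial.monomial m a).evalEval y (Real.exp (2 * y))
          = a.eval y * Real.exp (2 * y) ^ m := by
        intro y
        rw [Polynomial.evalEval, Polynomial.eval_monomial, ← Polynomial.C_pow,
          Polynomial.eval_mul, Polynomial.eval_C]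
      have h2 : HasDerivAt (fun y => Real.exp (2 * y)) (Real.exp (2 * x) * 2) x := by
        simpa using ((hasDerivAt_id x).const_mul (2 : ℝ)).exp
      have h3 : HasDerivAt (fun y => Real.exp (2 * y) ^ m)
          ((m : ℝ) * Real.exp (2 * x) ^ (m - 1) * (Real.exp (2 * x) * 2)) x := h2.pow m
      have h4 := (a.hasDerivAt x).mul h3
      have hEq : (Polynomial.monomial m
            (Polynomial.derivative a + Polynomial.C (2 * (m : ℝ)) * a)).evalEval x
            (Real.exp (2 * x))
          = (Polynomial.derivative a).eval x * Real.exp (2 * x) ^ m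
            + a.eval x * ((m : ℝ) * Real.exp (2 * x) ^ (m - 1) * (Real.exp (2 * x) * 2)) := by
        rw [Polynomial.evalEval, Polynomial.eval_monomial, ← Polynomial.C_pow,
          Polynomial.eval_mul, Polynomial.eval_C, Polynomial.eval_add, Polynomial.eval_mul,
          Polynomial.eval_C]
        cases m with
        | zero => simp
        | succ m' =>
            rw [Nat.add_sub_cancel]
            push_cast
            ring_nf
      rw [hEq]
      exact h4.congr_of_eventuallyEq (Filter.Eventually.of_forall heE)
  
-- FTC
lemma hasDerivAt_E (x : ℝ) (hx : x ∈ Set.Ioi (-1 : ℝ)) :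
    HasDerivAt (fun y => ∫ t in (0 : ℝ)..y, Real.exp (2 * t) / (t + 1))
      (Real.exp (2 * x) / (x + 1)) x := by
  have hsub : Set.uIcc (0 : ℝ) x ⊆ Set.Ioi (-1 : ℝ) := fun t ht => by
    have h1 := Set.mem_uIcc.mp ht
    simp only [Set.mem_Ioi] at hx ⊢
    rcases h1 with ⟨h2, _⟩ | ⟨h2, _⟩ <;> linarith
  have hcont : ∀ t ∈ Set.Ioi (-1 : ℝ), ContinuousAt (fun t => Real.exp (2 * t) / (t + 1)) t := by
    intro t ht
    have hne : t + 1 ≠ 0 := by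
      simp only [Set.mem_Ioi] at ht; linarith
    exact ContinuousAt.div (by fun_prop) (by fun_prop) hne
  have hint : IntervalIntegrable (fun t => Real.exp (2 * t) / (t + 1))
      MeasureTheory.volume 0 x :=
    ContinuousOn.intervalIntegrable fun t ht => (hcont t (hsub ht)).continuousWithinAt
  exact intervalIntegral.integral_hasDerivAt_right hint
    (ContinuousAt.stronglyMeasurableAtFilter isOpen_Ioi hcont x hx) (hcont x hx)


lemma aeval_evalEval (R : MvPolynomial (Fin 2) ℝ) (x u : ℝ) :
    (MvPolynomial.aeval ![Polynomial.C Polynomial.X, (Polynomial.X : ℝ[X][Y])] R).evalEval x u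
      = MvPolynomial.eval ![x, u] R := by
  induction R using MvPolynomial.induction_on with
  | C a => simp [MvPolynomial.algebraMap_eq, Polynomial.evalEval_C]
  | add p q hp hq => simp only [map_add, Polynomial.evalEval_add, hp, hq]
  | mul_X p i hp =>
      rw [map_mul, map_mul, Polynomial.evalEval_mul, hp, MvPolynomial.aeval_X,
        MvPolynomial.eval_X]
      congr 1
      fin_cases i
      · simp [Polynomial.evalEval_C]
      · simp


lemma Dop_zero : Dop 0 = 0 := by
  unfold Dop
  exact Polynomial.sum_zero_index _

/-- The main algebraic contradiction: there are no bivariate polynomials `A, B` over `ℝ[x]`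
with `B ≠ 0` satisfying `(x+1)(A'B - AB') = u B²` where `'` is the derivation `Dop`. -/
lemma algebraic_contradiction (A B : ℝ[X][Y]) (hB : B ≠ 0)
    (heq : (Polynomial.X : ℝ[X][Y]) * (B * B)
        + Polynomial.C (Polynomial.X + 1) * (A * Dop B)
        = Polynomial.C (Polynomial.X + 1) * (Dop A * B)) : False := by
  set T : ℝ[X] := Polynomial.X + 1 with hT
  have hA : A ≠ 0 := by
    rintro rfl
    simp only [Dop_zero, zero_mul, mul_zero, add_zero] at heq
    rcases mul_eq_zero.mp heq with h | h
    · exact Polynomial.X_ne_zero h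
    · rcases mul_eq_zero.mp h with h | h <;> exact hB h
  set m := A.natDegree with hm
  set n := B.natDegree with hn
  set am := A.coeff m with ham_def
  set bn := B.coeff n with hbn_def
  have ham : am ≠ 0 := Polynomial.leadingCoeff_ne_zero.mpr hA
  have hbn : bn ≠ 0 := Polynomial.leadingCoeff_ne_zero.mpr hB
  rcases le_or_gt m n with hmn | hmn
  · -- m ≤ n : compare coefficients at degree n + n + 1
    have hc := congrArg (fun r : ℝ[X][Y] => r.coeff (n + n + 1)) heq
    simp only [Polynomial.coeff_add, Polynomial.coeff_C_mul, Polynomial.coeff_X_mul] at hc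
    have h1 : (A * Dop B).coeff (n + n + 1) = 0 := by
      apply Polynomial.coeff_eq_zero_of_natDegree_lt
      calc (A * Dop B).natDegree ≤ m + (Dop B).natDegree := Polynomial.natDegree_mul_le
        _ ≤ m + n := by gcongr; exact Dop_natDegree_le B
        _ < n + n + 1 := by omega
    have h2 : (Dop A * B).coeff (n + n + 1) = 0 := by
      apply Polynomial.coeff_eq_zero_of_natDegree_lt
      calc (Dop A * B).natDegree ≤ (Dop A).natDegree + n := Polynomial.natDegree_mul_le
        _ ≤ m + n := by gcongr; exact Dop_natDegree_le A
        _ < n + n + 1 := by omega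
    have h3 : (B * B).coeff (n + n) = bn * bn :=
      Polynomial.coeff_mul_add_eq_of_natDegree_le le_rfl le_rfl
    rw [h1, h2, h3] at hc
    simp only [mul_zero, add_zero] at hc
    exact mul_ne_zero hbn hbn hc
  · -- n < m : compare coefficients at degree m + n
    have hd : m + n = (m + n - 1) + 1 := by omega
    have hc := congrArg (fun r : ℝ[X][Y] => r.coeff (m + n)) heq
    simp only [Polynomial.coeff_add, Polynomial.coeff_C_mul] at hc
    have h1 : (A * Dop B).coeff (m + n) = am * ((Dop B).coeff n) :=
      Polynomial.coeff_mul_add_eq_of_natDegree_le le_rfl (Dop_natDegree_le B)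
    have h2 : (Dop A * B).coeff (m + n) = ((Dop A).coeff m) * bn :=
      Polynomial.coeff_mul_add_eq_of_natDegree_le (Dop_natDegree_le A) le_rfl
    have hXc : ((Polynomial.X : ℝ[X][Y]) * (B * B)).coeff (m + n)
        = (B * B).coeff (m + n - 1) := by
      rw [hd, Polynomial.coeff_X_mul, Nat.add_sub_cancel]
    rw [h1, h2, hXc, Dop_coeff, Dop_coeff] at hc
    rcases eq_or_lt_of_le (Nat.succ_le_of_lt hmn) with hm1 | hm1
    · -- m = n + 1 : Liouville case
      have hbb : (B * B).coeff (m + n - 1) = bn * bn := by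
        have : m + n - 1 = n + n := by omega
        rw [this]
        exact Polynomial.coeff_mul_add_eq_of_natDegree_le le_rfl le_rfl
      rw [hbb] at hc
      apply no_liouville am bn hbn
      have hcast : Polynomial.C (2 * (m : ℝ))
          = Polynomial.C (2 * (n : ℝ)) + Polynomial.C (2 : ℝ) := by
        rw [← map_add]
        congr 1
        have : (m : ℝ) = (n : ℝ) + 1 := by
          rw [← hm1]; push_cast; ring
        rw [this]; ring
      rw [hcast] at hc
      have hC2 : (Polynomial.C (2 : ℝ)) = (2 : ℝ[X]) := map_ofNat Polynomial.C 2
      rw [hC2] at hc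
      rw [sq]
      linear_combination -hc
    · -- n + 1 < m : log derivative case
      have hbb : (B * B).coeff (m + n - 1) = 0 := by
        apply Polynomial.coeff_eq_zero_of_natDegree_lt
        calc (B * B).natDegree ≤ n + n := Polynomial.natDegree_mul_le
          _ < m + n - 1 := by omega
      rw [hbb, zero_add] at hc
      have hTne : T ≠ 0 := X_add_one_ne_zero
      have hc2 := mul_left_cancel₀ hTne hc
      apply no_logderiv am bn ham hbn (2 * ((n : ℝ) - (m : ℝ)))
        (by
          have hnm : (n : ℝ) < (m : ℝ) := by exact_mod_cast hmn
          intro h0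
          have : (n : ℝ) - (m : ℝ) = 0 := by linarith [mul_eq_zero.mp h0]
          linarith)
      have hcast : Polynomial.C (2 * ((n : ℝ) - (m : ℝ)))
          = Polynomial.C (2 * (n : ℝ)) - Polynomial.C (2 * (m : ℝ)) := by
        rw [← map_sub]; congr 1; ring
      rw [hcast]
      linear_combination -hc2


end ExponentialIntegralAux

/-- The function `E(x) = ∫₀ˣ e^{2t}/(t+1) dt` on `(−1, ∞)` is not a rational function
of `x` and `e^{2x}`: there are no real polynomials `P, Q` in two variables with
`Q(x, e^{2x}) ≠ 0` on `(−1, ∞)` and `E(x) = P(x, e^{2x})/Q(x, e^{2x})` on `(−1, ∞)`. -/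
theorem exponential_integral_not_rational :
    ¬ ∃ P Q : MvPolynomial (Fin 2) ℝ,
      (∀ x ∈ Set.Ioi (-1 : ℝ),
        MvPolynomial.eval ![x, Real.exp (2 * x)] Q ≠ 0) ∧
      (∀ x ∈ Set.Ioi (-1 : ℝ),
        (∫ t in (0 : ℝ)..x, Real.exp (2 * t) / (t + 1)) =
          MvPolynomial.eval ![x, Real.exp (2 * x)] P /
            MvPolynomial.eval ![x, Real.exp (2 * x)] Q) := by
  rintro ⟨P, Q, hQ, hPQ⟩
  set A : ℝ[X][Y] :=
    MvPolynomial.aeval ![Polynomial.C Polynomial.X, (Polynomial.X : ℝ[X][Y])] P with hAdef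
  set B : ℝ[X][Y] :=
    MvPolynomial.aeval ![Polynomial.C Polynomial.X, (Polynomial.X : ℝ[X][Y])] Q with hBdef
  have hBne : ∀ x ∈ Set.Ioi (-1 : ℝ), B.evalEval x (Real.exp (2 * x)) ≠ 0 := fun x hx => by
    rw [hBdef, aeval_evalEval]; exact hQ x hx
  have hEeq : ∀ x ∈ Set.Ioi (-1 : ℝ), (∫ t in (0 : ℝ)..x, Real.exp (2 * t) / (t + 1))
      = A.evalEval x (Real.exp (2 * x)) / B.evalEval x (Real.exp (2 * x)) := fun x hx => by
    rw [hAdef, hBdef, aeval_evalEval, aeval_evalEval]; exact hPQ x hx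
  -- the key bivariate polynomial identity
  have hSzero : (Polynomial.X : ℝ[X][Y]) * (B * B)
      + Polynomial.C (Polynomial.X + 1) * (A * Dop B)
      - Polynomial.C (Polynomial.X + 1) * (Dop A * B) = 0 := by
    apply evalEval_exp_zero
    intro x hx
    have hx1 : (0 : ℝ) < x + 1 := by
      have : (-1 : ℝ) < x := hx
      linarith
    have hBx : B.evalEval x (Real.exp (2 * x)) ≠ 0 := hBne x hx
    -- the function E·GB − GA vanishes on the open set Ioi (-1)
    have hH : ∀ y ∈ Set.Ioi (-1 : ℝ),
        (∫ t in (0 : ℝ)..y, Real.exp (2 * t) / (t + 1)) * B.evalEval y (Real.exp (2 * y))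
          - A.evalEval y (Real.exp (2 * y)) = 0 := fun y hy => by
      rw [hEeq y hy, div_mul_cancel₀ _ (hBne y hy), sub_self]
    have hdH : HasDerivAt (fun y =>
        (∫ t in (0 : ℝ)..y, Real.exp (2 * t) / (t + 1)) * B.evalEval y (Real.exp (2 * y))
          - A.evalEval y (Real.exp (2 * y)))
        (Real.exp (2 * x) / (x + 1) * B.evalEval x (Real.exp (2 * x))
          + (∫ t in (0 : ℝ)..x, Real.exp (2 * t) / (t + 1))
              * (Dop B).evalEval x (Real.exp (2 * x))
          - (Dop A).evalEval x (Real.exp (2 * x))) x :=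
      ((hasDerivAt_E x hx).mul (hasDerivAt_evalEval B x)).sub (hasDerivAt_evalEval A x)
    have hdzero : HasDerivAt (fun y =>
        (∫ t in (0 : ℝ)..y, Real.exp (2 * t) / (t + 1)) * B.evalEval y (Real.exp (2 * y))
          - A.evalEval y (Real.exp (2 * y))) 0 x := by
      apply (hasDerivAt_const x (0 : ℝ)).congr_of_eventuallyEq
      apply Filter.eventuallyEq_of_mem (isOpen_Ioi.mem_nhds hx)
      intro y hy
      exact hH y hy
    have hkey := hdH.unique hdzero
    rw [hEeq x hx] at hkey
    -- expand the evaluation of the bivariate polynomial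
    have hexp : ((Polynomial.X : ℝ[X][Y]) * (B * B)
        + Polynomial.C (Polynomial.X + 1) * (A * Dop B)
        - Polynomial.C (Polynomial.X + 1) * (Dop A * B)).evalEval x (Real.exp (2 * x))
        = Real.exp (2 * x) * (B.evalEval x (Real.exp (2 * x)) * B.evalEval x (Real.exp (2 * x)))
          + (x + 1) * (A.evalEval x (Real.exp (2 * x)) * (Dop B).evalEval x (Real.exp (2 * x)))
          - (x + 1) * ((Dop A).evalEval x (Real.exp (2 * x))
              * B.evalEval x (Real.exp (2 * x))) := by
      simp only [Polynomial.evalEval_sub, Polynomial.evalEval_add, Polynomial.evalEval_mul,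
        Polynomial.evalEval_X, Polynomial.evalEval_C, Polynomial.eval_add, Polynomial.eval_X,
        Polynomial.eval_one]
    rw [hexp]
    have hx1' : x + 1 ≠ 0 := ne_of_gt hx1
    field_simp at hkey
    linear_combination hkey
  exact algebraic_contradiction A B
    (fun h0 => hBne 0 (by norm_num) (by rw [h0]; simp))
    (by linear_combination hSzero)
end
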